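/- Let A be a real associative commutative (not necessarily unital) algebra admitting a nondegenerate symmetric bilinear form B : A × A → ℝ with B(ab, c) = B(b, ac) for all a,b,c ∈ A, and let (g, J, φ) be a pseudo-Hermitian quadratic Lie algebra. Then on the tensor product G = g ⊗_ℝ A the bracket determined by [x⊗a, y⊗b] = [x,y]⊗(ab) is a Lie bracket, the map J' determined by J'(x⊗a) = Jx⊗a is a complex structure, and the bilinear form ϕ determined by ϕ(x⊗a, y⊗b) = φ(x,y)·B(a,b) is nondegenerate, symmetric and invariant, so that (G, J', ϕ) is a pseudo-Hermitian quadratic Lie algebra. -/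

import Mathlib

open TensorProduct

/-- A pseudo-Hermitian quadratic Lie algebra structure on a real vector space `V`:
`br` is a Lie bracket, `J` is an integrable complex structure, and `φ` is a
nondegenerate symmetric invariant bilinear form compatible with `J`. -/
structure IsPHQ (V : Type*) [AddCommGroup V] [Module ℝ V]
    (br : V → V → V) (J : V → V) (φ : V → V → ℝ) : Prop where
  br_add_left : ∀ x y z : V, br (x + y) z = br x z + br y z
  br_smul_left : ∀ (c : ℝ) (x z : V), br (c • x) z = c • br x z
  br_skew : ∀ x y : V, br x y = - br y x
  jacobi : ∀ x y z : V, br x (br y z) + br y (br z x) + br z (br x y) = 0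
  J_add : ∀ x y : V, J (x + y) = J x + J y
  J_smul : ∀ (c : ℝ) (x : V), J (c • x) = c • J x
  J_sq : ∀ x : V, J (J x) = - x
  integrable : ∀ x y : V, br x y + J (br (J x) y) + J (br x (J y)) - br (J x) (J y) = 0
  phi_add_left : ∀ x y z : V, φ (x + y) z = φ x z + φ y z
  phi_smul_left : ∀ (c : ℝ) (x y : V), φ (c • x) y = c * φ x y
  phi_symm : ∀ x y : V, φ x y = φ y x
  phi_nondeg : ∀ x : V, (∀ y : V, φ x y = 0) → x = 0
  phi_invariant : ∀ x y z : V, φ (br x y) z + φ y (br x z) = 0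
  phi_hermitian : ∀ x y : V, φ (J x) (J y) = φ x y

/-- Equivalence of pseudo-Hermitian quadratic Lie algebras: a linear isomorphism
intertwining the brackets and the complex structures and preserving the metrics. -/
def PHQEquiv {V W : Type*} [AddCommGroup V] [Module ℝ V] [AddCommGroup W] [Module ℝ W]
    (brV : V → V → V) (JV : V → V) (φV : V → V → ℝ)
    (brW : W → W → W) (JW : W → W) (φW : W → W → ℝ) : Prop :=
  ∃ ψ : V ≃ₗ[ℝ] W, (∀ x y, ψ (brV x y) = brW (ψ x) (ψ y)) ∧
    (∀ x, ψ (JV x) = JW (ψ x)) ∧ ∀ x y, φW (ψ x) (ψ y) = φV x y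

/-- Lower central series of a subalgebra `W` with respect to a bracket `br`. -/
def lcsW {V : Type*} [AddCommGroup V] [Module ℝ V] (br : V → V → V)
    (W : Submodule ℝ V) : ℕ → Submodule ℝ V
  | 0 => W
  | n + 1 => Submodule.span ℝ {w : V | ∃ x ∈ lcsW br W n, ∃ y ∈ W, w = br x y}

/-- `φ` has signature `(a, b)`: there is an orthogonal decomposition into a
negative definite subspace of dimension `a` and a positive definite subspace of
dimension `b` (the convention of the paper, where positive definite is `(0, 2n)`). -/
def hasSignature {V : Type*} [AddCommGroup V] [Module ℝ V]
    (φ : V → V → ℝ) (a b : ℕ) : Prop :=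
  ∃ N P : Submodule ℝ V, N ⊓ P = ⊥ ∧ N ⊔ P = ⊤ ∧
    (∀ x ∈ N, ∀ y ∈ P, φ x y = 0) ∧
    (∀ x ∈ N, x ≠ 0 → φ x x < 0) ∧ (∀ x ∈ P, x ≠ 0 → 0 < φ x x) ∧
    Module.finrank ℝ N = a ∧ Module.finrank ℝ P = b

/-- The bracket of the pHQ-double extension `g = ℝz ⊕ ℝz' ⊕ g₀ ⊕ ℝv' ⊕ ℝv`,
with an element `(a, b, x, c, d)` standing for `a·z + b·z' + x + c·v' + d·v`. -/
def extBr {V : Type*} [AddCommGroup V] [Module ℝ V]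
    (br₀ : V → V → V) (φ₀ : V → V → ℝ) (D F : V → V) (s₀ : V) :
    (ℝ × ℝ × V × ℝ × ℝ) → (ℝ × ℝ × V × ℝ × ℝ) → (ℝ × ℝ × V × ℝ × ℝ) :=
  fun P Q =>
    (φ₀ (F P.2.2.1) Q.2.2.1 + P.2.2.2.1 * φ₀ s₀ Q.2.2.1 - Q.2.2.2.1 * φ₀ s₀ P.2.2.1,
     φ₀ (D P.2.2.1) Q.2.2.1 - P.2.2.2.2 * φ₀ s₀ Q.2.2.1 + Q.2.2.2.2 * φ₀ s₀ P.2.2.1,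
     br₀ P.2.2.1 Q.2.2.1 + P.2.2.2.2 • F Q.2.2.1 - Q.2.2.2.2 • F P.2.2.1
       + P.2.2.2.1 • D Q.2.2.1 - Q.2.2.2.1 • D P.2.2.1
       + (P.2.2.2.2 * Q.2.2.2.1 - P.2.2.2.1 * Q.2.2.2.2) • s₀,
     0, 0)

/-- The complex structure of the pHQ-double extension:
`Jz = z'`, `Jz' = -z`, `Jv = v'`, `Jv' = -v`, `Jx = J₀x`. -/
def extJ {V : Type*} [AddCommGroup V] [Module ℝ V] (J₀ : V → V) :
    (ℝ × ℝ × V × ℝ × ℝ) → (ℝ × ℝ × V × ℝ × ℝ) :=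
  fun P => (-P.2.1, P.1, J₀ P.2.2.1, P.2.2.2.2, -P.2.2.2.1)

/-- The metric of the pHQ-double extension: `φ(z,v) = φ(z',v') = 1` and `φ₀` on `g₀`. -/
def extPhi {V : Type*} [AddCommGroup V] [Module ℝ V] (φ₀ : V → V → ℝ) :
    (ℝ × ℝ × V × ℝ × ℝ) → (ℝ × ℝ × V × ℝ × ℝ) → ℝ :=
  fun P Q => P.1 * Q.2.2.2.2 + P.2.2.2.2 * Q.1 + P.2.1 * Q.2.2.2.1 + P.2.2.2.1 * Q.2.1
    + φ₀ P.2.2.1 Q.2.2.1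

/-- The data `(D, F, s₀)` needed for a pHQ-double extension of `(g₀, br₀, J₀, φ₀)`:
`D`, `F` are `φ₀`-skewsymmetric derivations with `[F + J₀D, J₀] = 0` and
`[F, D] = ad_{g₀}(s₀)`. -/
def IsPHQDblExtData (V : Type*) [AddCommGroup V] [Module ℝ V]
    (br₀ : V → V → V) (J₀ : V → V) (φ₀ : V → V → ℝ) (D F : V → V) (s₀ : V) : Prop :=
  (∀ x y, D (x + y) = D x + D y) ∧ (∀ (c : ℝ) (x : V), D (c • x) = c • D x) ∧
  (∀ x y, F (x + y) = F x + F y) ∧ (∀ (c : ℝ) (x : V), F (c • x) = c • F x) ∧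
  (∀ x y, φ₀ (D x) y = - φ₀ x (D y)) ∧ (∀ x y, φ₀ (F x) y = - φ₀ x (F y)) ∧
  (∀ x y, D (br₀ x y) = br₀ (D x) y + br₀ x (D y)) ∧
  (∀ x y, F (br₀ x y) = br₀ (F x) y + br₀ x (F y)) ∧
  (∀ x, F (J₀ x) + J₀ (D (J₀ x)) = J₀ (F x) + J₀ (J₀ (D x))) ∧
  (∀ x, F (D x) - D (F x) = br₀ s₀ x)

/-! ### Concrete models -/

/-- Standard complex structure on `ℝ²`. -/
def j2 : (Fin 2 → ℝ) → (Fin 2 → ℝ) := fun x => ![-x 1, x 0]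

/-- Positive definite Hermitian metric on `ℝ²` (the algebra `ℝ^{2,0}`). -/
def phi2 : (Fin 2 → ℝ) → (Fin 2 → ℝ) → ℝ := fun x y => x 0 * y 0 + x 1 * y 1

/-- Complex structure of the 6-dimensional Lie algebra `ℒ`, on the ordered basis
`x₁, Jx₁, x₂, Jx₂, x₃, Jx₃`. -/
def j6 : (Fin 6 → ℝ) → (Fin 6 → ℝ) := fun x => ![-x 1, x 0, -x 3, x 2, -x 5, x 4]

/-- Bracket of `ℒ`: `[x₁, Jx₁] = x₂`, `[x₁, x₂] = -Jx₃`, `[Jx₁, x₂] = x₃` on the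
ordered basis `x₁, Jx₁, x₂, Jx₂, x₃, Jx₃`. -/
def brL : (Fin 6 → ℝ) → (Fin 6 → ℝ) → (Fin 6 → ℝ) := fun x y =>
  ![0, 0, x 0 * y 1 - x 1 * y 0, 0, x 1 * y 2 - x 2 * y 1, -(x 0 * y 2 - x 2 * y 0)]

/-- The metric of `ℒ^{4,2}`: `φ(x₁,x₃) = φ(Jx₁,Jx₃) = 1`, `φ(x₂,x₂) = φ(Jx₂,Jx₂) = 1`. -/
def phiL : (Fin 6 → ℝ) → (Fin 6 → ℝ) → ℝ := fun x y =>
  x 0 * y 4 + x 4 * y 0 + x 1 * y 5 + x 5 * y 1 + x 2 * y 2 + x 3 * y 3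

/-- Complex structure on `ℝ⁸`, ordered basis `x₁, x₂, x₃, x₄, x₁*, x₂*, x₃*, x₄*` with
`Jx₁ = x₂`, `Jx₃ = x₄`, `Jx₁* = x₂*`, `Jx₃* = x₄*`. -/
def j8 : (Fin 8 → ℝ) → (Fin 8 → ℝ) := fun x =>
  ![-x 1, x 0, -x 3, x 2, -x 5, x 4, -x 7, x 6]

/-- The metric `φ(xᵢ, xⱼ*) = δᵢⱼ` of the `T*`-extensions of the Kodaira–Thurston algebra. -/
def phi8 : (Fin 8 → ℝ) → (Fin 8 → ℝ) → ℝ := fun x y =>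
  x 0 * y 4 + x 4 * y 0 + x 1 * y 5 + x 5 * y 1 + x 2 * y 6 + x 6 * y 2
    + x 3 * y 7 + x 7 * y 3

/-- A neutral pseudo-Hermitian metric on abelian `ℝ⁸` (the algebra `ℝ^{4,4}`). -/
def phi44 : (Fin 8 → ℝ) → (Fin 8 → ℝ) → ℝ := fun x y =>
  x 0 * y 0 + x 1 * y 1 + x 2 * y 2 + x 3 * y 3
    - x 4 * y 4 - x 5 * y 5 - x 6 * y 6 - x 7 * y 7

/-- Bracket of `T*₀k`: `[x₁,x₂] = x₃`, `[x₃*,x₁] = x₂*`, `[x₃*,x₂] = -x₁*`. -/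
def brT0 : (Fin 8 → ℝ) → (Fin 8 → ℝ) → (Fin 8 → ℝ) := fun x y =>
  ![0, 0, x 0 * y 1 - x 1 * y 0, 0,
    -(x 6 * y 1 - x 1 * y 6), x 6 * y 0 - x 0 * y 6, 0, 0]

/-- Bracket of `T*_{θ₃}k`: `[x₁,x₂] = x₃`, `[x₁,x₃] = x₄*`, `[x₁,x₄] = -x₃*`,
`[x₃,x₄] = x₁*`, `[x₃*,x₁] = x₂*`, `[x₃*,x₂] = -x₁*`. -/
def brT3 : (Fin 8 → ℝ) → (Fin 8 → ℝ) → (Fin 8 → ℝ) := fun x y =>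
  ![0, 0, x 0 * y 1 - x 1 * y 0, 0,
    (x 2 * y 3 - x 3 * y 2) - (x 6 * y 1 - x 1 * y 6),
    x 6 * y 0 - x 0 * y 6,
    -(x 0 * y 3 - x 3 * y 0),
    x 0 * y 2 - x 2 * y 0]

/-- Bracket of `T*_{αθ₁}k`: `[x₁,x₂] = x₃ + αx₃*`, `[x₁,x₃] = -αx₂*`, `[x₂,x₃] = αx₁*`,
`[x₃*,x₁] = x₂*`, `[x₃*,x₂] = -x₁*`. -/
def brTal (α : ℝ) : (Fin 8 → ℝ) → (Fin 8 → ℝ) → (Fin 8 → ℝ) := fun x y =>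
  ![0, 0, x 0 * y 1 - x 1 * y 0, 0,
    α * (x 1 * y 2 - x 2 * y 1) - (x 6 * y 1 - x 1 * y 6),
    -(α * (x 0 * y 2 - x 2 * y 0)) + (x 6 * y 0 - x 0 * y 6),
    α * (x 0 * y 1 - x 1 * y 0), 0]

/-- Bracket of the Kodaira–Thurston algebra `k`: `[x₁, x₂] = x₃`. -/
def brK : (Fin 4 → ℝ) → (Fin 4 → ℝ) → (Fin 4 → ℝ) := fun x y =>
  ![0, 0, x 0 * y 1 - x 1 * y 0, 0]

/-- The abelian complex structure of the Kodaira–Thurston algebra: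
`Jx₁ = x₂`, `Jx₂ = -x₁`, `Jx₃ = x₄`, `Jx₄ = -x₃`. -/
def jK : (Fin 4 → ℝ) → (Fin 4 → ℝ) := fun x => ![-x 1, x 0, -x 3, x 2]

/-- The dual basis vectors `xᵢ*` of `k*`. -/
noncomputable def p4 (i : Fin 4) : Module.Dual ℝ (Fin 4 → ℝ) := LinearMap.proj i

/-- The cyclic cocycle `θ₁`. -/
noncomputable def th1 : (Fin 4 → ℝ) → (Fin 4 → ℝ) → Module.Dual ℝ (Fin 4 → ℝ) := fun x y =>
  (x 0 * y 1 - x 1 * y 0) • p4 2 - (x 0 * y 2 - x 2 * y 0) • p4 1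
    + (x 1 * y 2 - x 2 * y 1) • p4 0

/-- The cyclic cocycle `θ₂`. -/
noncomputable def th2 : (Fin 4 → ℝ) → (Fin 4 → ℝ) → Module.Dual ℝ (Fin 4 → ℝ) := fun x y =>
  (x 0 * y 1 - x 1 * y 0) • p4 3 - (x 0 * y 3 - x 3 * y 0) • p4 1
    + (x 1 * y 3 - x 3 * y 1) • p4 0

/-- The cyclic cocycle `θ₃`. -/
noncomputable def th3 : (Fin 4 → ℝ) → (Fin 4 → ℝ) → Module.Dual ℝ (Fin 4 → ℝ) := fun x y =>
  (x 0 * y 2 - x 2 * y 0) • p4 3 - (x 0 * y 3 - x 3 * y 0) • p4 2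
    + (x 2 * y 3 - x 3 * y 2) • p4 0

/-- The cyclic cocycle `θ₄`. -/
noncomputable def th4 : (Fin 4 → ℝ) → (Fin 4 → ℝ) → Module.Dual ℝ (Fin 4 → ℝ) := fun x y =>
  (x 1 * y 2 - x 2 * y 1) • p4 3 - (x 1 * y 3 - x 3 * y 1) • p4 2
    + (x 2 * y 3 - x 3 * y 2) • p4 1

section StmtFourAux

variable {g A : Type*} [AddCommGroup g] [Module ℝ g]
  [NonUnitalCommRing A] [Module ℝ A] [SMulCommClass ℝ A A] [IsScalarTower ℝ A A]

/-- auxiliary: the bracket on the tensor product, as a bilinear map. -/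
noncomputable def stmt4BrG (brl : g →ₗ[ℝ] g →ₗ[ℝ] g) :
    g ⊗[ℝ] A →ₗ[ℝ] g ⊗[ℝ] A →ₗ[ℝ] g ⊗[ℝ] A :=
  (TensorProduct.homTensorHomMap (RingHom.id ℝ) g A g A).comp
    (TensorProduct.map brl (LinearMap.mul ℝ A))

@[simp] lemma stmt4BrG_tmul (brl : g →ₗ[ℝ] g →ₗ[ℝ] g) (x y : g) (a b : A) :
    stmt4BrG brl (x ⊗ₜ[ℝ] a) (y ⊗ₜ[ℝ] b) = brl x y ⊗ₜ[ℝ] (a * b) := by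
  simp [stmt4BrG]

omit [SMulCommClass ℝ A A] [IsScalarTower ℝ A A] in
/-- auxiliary: the metric on the tensor product, as a bilinear form. -/
noncomputable def stmt4Phi (φl : g →ₗ[ℝ] Module.Dual ℝ g)
    (Bl : A →ₗ[ℝ] Module.Dual ℝ A) :
    g ⊗[ℝ] A →ₗ[ℝ] Module.Dual ℝ (g ⊗[ℝ] A) :=
  (TensorProduct.dualDistrib ℝ g A).comp (TensorProduct.map φl Bl)

omit [SMulCommClass ℝ A A] [IsScalarTower ℝ A A] in
@[simp] lemma stmt4Phi_tmul (φl : g →ₗ[ℝ] Module.Dual ℝ g)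
    (Bl : A →ₗ[ℝ] Module.Dual ℝ A) (x y : g) (a b : A) :
    stmt4Phi φl Bl (x ⊗ₜ[ℝ] a) (y ⊗ₜ[ℝ] b) = φl x y * Bl a b := by
  simp [stmt4Phi]

omit [SMulCommClass ℝ A A] [IsScalarTower ℝ A A] in
/-- auxiliary: the contraction of the second tensor factor against `B(·, b)`. -/
noncomputable def stmt4Contr (Bl : A →ₗ[ℝ] Module.Dual ℝ A) (b : A) :
    g ⊗[ℝ] A →ₗ[ℝ] g :=
  (TensorProduct.rid ℝ g).toLinearMap ∘ₗ (LinearMap.lTensor g (Bl.flip b))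

omit [SMulCommClass ℝ A A] [IsScalarTower ℝ A A] in
@[simp] lemma stmt4Contr_tmul (Bl : A →ₗ[ℝ] Module.Dual ℝ A) (b : A) (x : g) (a : A) :
    stmt4Contr Bl b (x ⊗ₜ[ℝ] a) = Bl a b • x := by
  simp [stmt4Contr]

/-- The main construction, for linear-map data. -/
theorem stmt4_main
    (Bl : A →ₗ[ℝ] Module.Dual ℝ A)
    (hBsymm : ∀ a b, Bl a b = Bl b a)
    (hBnondeg : ∀ a, (∀ b, Bl a b = 0) → a = 0)
    (hBassoc : ∀ a b c, Bl (a * b) c = Bl b (a * c))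
    (brl : g →ₗ[ℝ] g →ₗ[ℝ] g) (Jl : g →ₗ[ℝ] g) (φl : g →ₗ[ℝ] Module.Dual ℝ g)
    (hsk : ∀ x y, brl x y = - brl y x)
    (hjac : ∀ x y z, brl x (brl y z) + brl y (brl z x) + brl z (brl x y) = 0)
    (hJ2 : ∀ x, Jl (Jl x) = - x)
    (hint : ∀ x y,
      brl x y + Jl (brl (Jl x) y) + Jl (brl x (Jl y)) - brl (Jl x) (Jl y) = 0)
    (hpsym : ∀ x y, φl x y = φl y x)
    (hpnd : ∀ x, (∀ y, φl x y = 0) → x = 0)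
    (hpinv : ∀ x y z, φl (brl x y) z + φl y (brl x z) = 0)
    (hpherm : ∀ x y, φl (Jl x) (Jl y) = φl x y) :
    IsPHQ (g ⊗[ℝ] A) (fun u v => stmt4BrG brl u v) (fun u => Jl.rTensor A u)
      (fun u v => stmt4Phi φl Bl u v) := by
  classical
  constructor
  · intro u v w; simp [map_add]
  · intro c u v; simp [map_smul]
  · -- skew
    intro u v
    induction u using TensorProduct.induction_on with
    | zero => simp
    | tmul x a =>
      induction v using TensorProduct.induction_on with
      | zero => simp
      | tmul y b =>
        rw [stmt4BrG_tmul, stmt4BrG_tmul, hsk x y, neg_tmul, mul_comm b a]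
      | add v1 v2 ih1 ih2 =>
        simp only [map_add, LinearMap.add_apply, ih1, ih2]; abel
    | add u1 u2 ih1 ih2 =>
      simp only [map_add, LinearMap.add_apply, ih1, ih2]; abel
  · -- jacobi
    intro u v w
    induction u using TensorProduct.induction_on with
    | zero => simp
    | tmul x a =>
      induction v using TensorProduct.induction_on with
      | zero => simp
      | tmul y b =>
        induction w using TensorProduct.induction_on with
        | zero => simp
        | tmul z c =>
          simp only [stmt4BrG_tmul]
          rw [show b * (c * a) = a * (b * c) by rw [mul_comm c a, mul_left_comm],
            show c * (a * b) = a * (b * c) by rw [mul_comm, mul_assoc],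
            ← add_tmul, ← add_tmul, hjac, zero_tmul]
        | add w1 w2 ih1 ih2 =>
          simp only [map_add, LinearMap.add_apply]
          have h12 := congrArg₂ (· + ·) ih1 ih2
          simp only [add_zero] at h12
          rw [← h12]; abel
      | add v1 v2 ih1 ih2 =>
        simp only [map_add, LinearMap.add_apply]
        have h12 := congrArg₂ (· + ·) ih1 ih2
        simp only [add_zero] at h12
        rw [← h12]; abel
    | add u1 u2 ih1 ih2 =>
      simp only [map_add, LinearMap.add_apply]
      have h12 := congrArg₂ (· + ·) ih1 ih2
      simp only [add_zero] at h12
      rw [← h12]; abel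
  · intro u v; simp [map_add]
  · intro c u; simp [map_smul]
  · -- J squared
    intro u
    induction u using TensorProduct.induction_on with
    | zero => simp
    | tmul x a => rw [LinearMap.rTensor_tmul, LinearMap.rTensor_tmul, hJ2, neg_tmul]
    | add u1 u2 ih1 ih2 => simp only [map_add, ih1, ih2]; abel
  · -- integrability
    intro u v
    induction u using TensorProduct.induction_on with
    | zero => simp
    | tmul x a =>
      induction v using TensorProduct.induction_on with
      | zero => simp
      | tmul y b =>
        simp only [LinearMap.rTensor_tmul, stmt4BrG_tmul]
        rw [← add_tmul, ← add_tmul, ← sub_tmul, hint, zero_tmul]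
      | add v1 v2 ih1 ih2 =>
        simp only [map_add, LinearMap.add_apply]
        have h12 := congrArg₂ (· + ·) ih1 ih2
        simp only [add_zero] at h12
        rw [← h12]; abel
    | add u1 u2 ih1 ih2 =>
      simp only [map_add, LinearMap.add_apply]
      have h12 := congrArg₂ (· + ·) ih1 ih2
      simp only [add_zero] at h12
      rw [← h12]; abel
  · intro u v w; simp [map_add]
  · intro c u v; simp [map_smul]
  · -- symmetry
    intro u v
    induction u using TensorProduct.induction_on with
    | zero => simp
    | tmul x a =>
      induction v using TensorProduct.induction_on with
      | zero => simp
      | tmul y b => rw [stmt4Phi_tmul, stmt4Phi_tmul, hpsym, hBsymm]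
      | add v1 v2 ih1 ih2 => simp only [map_add, LinearMap.add_apply, ih1, ih2]
    | add u1 u2 ih1 ih2 => simp only [map_add, LinearMap.add_apply, ih1, ih2]
  · -- nondegeneracy
    intro t ht
    set bs := Module.Basis.ofVectorSpace ℝ g with hbs
    have claimA : ∀ (b : A) (s : g ⊗[ℝ] A) (y : g),
        stmt4Phi φl Bl s (y ⊗ₜ[ℝ] b) = φl (stmt4Contr Bl b s) y := by
      intro b s y
      induction s using TensorProduct.induction_on with
      | zero => simp
      | tmul x a =>
        rw [stmt4Phi_tmul, stmt4Contr_tmul, map_smul, LinearMap.smul_apply,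
          smul_eq_mul, mul_comm]
      | add s1 s2 ih1 ih2 => simp only [map_add, LinearMap.add_apply, ih1, ih2]
    have claimB : ∀ (b : A) (i : Module.Basis.ofVectorSpaceIndex ℝ g) (s : g ⊗[ℝ] A),
        Bl (TensorProduct.finsuppScalarLeft ℝ A _
          (TensorProduct.congr bs.repr (LinearEquiv.refl ℝ A) s) i) b
        = bs.repr (stmt4Contr Bl b s) i := by
      intro b i s
      induction s using TensorProduct.induction_on with
      | zero =>
        simp only [map_zero, LinearEquiv.map_zero, Finsupp.zero_apply,
          LinearMap.zero_apply]
      | tmul x a =>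
        rw [TensorProduct.congr_tmul, LinearEquiv.refl_apply,
          TensorProduct.finsuppScalarLeft_apply_tmul_apply, stmt4Contr_tmul,
          map_smul, map_smul, LinearMap.smul_apply, Finsupp.smul_apply,
          smul_eq_mul, smul_eq_mul, mul_comm]
      | add s1 s2 ih1 ih2 =>
        simp only [map_add, LinearEquiv.map_add, Finsupp.add_apply,
          LinearMap.add_apply, ih1, ih2]
    have hC : ∀ b : A, stmt4Contr Bl b t = 0 := by
      intro b
      apply hpnd
      intro y
      rw [← claimA b t y]
      exact ht (y ⊗ₜ[ℝ] b)
    have he : ∀ i, TensorProduct.finsuppScalarLeft ℝ A _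
        (TensorProduct.congr bs.repr (LinearEquiv.refl ℝ A) t) i = 0 := by
      intro i
      apply hBnondeg
      intro b
      rw [claimB b i t, hC b, LinearEquiv.map_zero, Finsupp.zero_apply]
    have h1 : TensorProduct.finsuppScalarLeft ℝ A _
        (TensorProduct.congr bs.repr (LinearEquiv.refl ℝ A) t) = 0 :=
      Finsupp.ext he
    exact (TensorProduct.congr bs.repr (LinearEquiv.refl ℝ A)).map_eq_zero_iff.mp
      ((TensorProduct.finsuppScalarLeft ℝ A _).map_eq_zero_iff.mp h1)
  · -- invariance
    intro u v w
    induction u using TensorProduct.induction_on with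
    | zero => simp
    | tmul x a =>
      induction v using TensorProduct.induction_on with
      | zero => simp
      | tmul y b =>
        induction w using TensorProduct.induction_on with
        | zero => simp
        | tmul z c =>
          simp only [stmt4BrG_tmul, stmt4Phi_tmul]
          rw [hBassoc, ← add_mul, hpinv, zero_mul]
        | add w1 w2 ih1 ih2 =>
          simp only [map_add, LinearMap.add_apply]
          linarith [ih1, ih2]
      | add v1 v2 ih1 ih2 =>
        simp only [map_add, LinearMap.add_apply]
        linarith [ih1, ih2]
    | add u1 u2 ih1 ih2 =>
      simp only [map_add, LinearMap.add_apply]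
      linarith [ih1, ih2]
  · -- hermitian
    intro u v
    induction u using TensorProduct.induction_on with
    | zero => simp
    | tmul x a =>
      induction v using TensorProduct.induction_on with
      | zero => simp
      | tmul y b =>
        simp only [LinearMap.rTensor_tmul, stmt4Phi_tmul]
        rw [hpherm]
      | add v1 v2 ih1 ih2 => simp only [map_add, LinearMap.add_apply, ih1, ih2]
    | add u1 u2 ih1 ih2 => simp only [map_add, LinearMap.add_apply, ih1, ih2]

end StmtFourAux

/-- the tensor product of a pseudo-Hermitian quadratic Lie algebra with
a commutative associative algebra carrying a suitable invariant form is again a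
pseudo-Hermitian quadratic Lie algebra. -/
theorem stmt_4 {g A : Type*} [AddCommGroup g] [Module ℝ g]
    [NonUnitalCommRing A] [Module ℝ A] [SMulCommClass ℝ A A] [IsScalarTower ℝ A A]
    (B : A → A → ℝ)
    (hBadd : ∀ a b c : A, B (a + b) c = B a c + B b c)
    (hBsmul : ∀ (r : ℝ) (a b : A), B (r • a) b = r * B a b)
    (hBsymm : ∀ a b : A, B a b = B b a)
    (hBnondeg : ∀ a : A, (∀ b : A, B a b = 0) → a = 0)
    (hBassoc : ∀ a b c : A, B (a * b) c = B b (a * c))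
    (br : g → g → g) (J : g → g) (φ : g → g → ℝ)
    (h : IsPHQ g br J φ) :
    ∃ (brG : g ⊗[ℝ] A → g ⊗[ℝ] A → g ⊗[ℝ] A)
      (J' : g ⊗[ℝ] A → g ⊗[ℝ] A) (ϕ : g ⊗[ℝ] A → g ⊗[ℝ] A → ℝ),
      (∀ (x y : g) (a b : A), brG (x ⊗ₜ[ℝ] a) (y ⊗ₜ[ℝ] b) = br x y ⊗ₜ[ℝ] (a * b)) ∧
      (∀ (x : g) (a : A), J' (x ⊗ₜ[ℝ] a) = J x ⊗ₜ[ℝ] a) ∧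
      (∀ (x y : g) (a b : A), ϕ (x ⊗ₜ[ℝ] a) (y ⊗ₜ[ℝ] b) = φ x y * B a b) ∧
      IsPHQ (g ⊗[ℝ] A) brG J' ϕ := by
  have hba' : ∀ x y z : g, br x (y + z) = br x y + br x z := fun x y z => by
    rw [h.br_skew x (y + z), h.br_add_left, neg_add, ← h.br_skew, ← h.br_skew]
  have hbs' : ∀ (c : ℝ) (x y : g), br x (c • y) = c • br x y := fun c x y => by
    rw [h.br_skew x (c • y), h.br_smul_left, ← smul_neg, ← h.br_skew]
  have hpa' : ∀ x y z : g, φ x (y + z) = φ x y + φ x z := fun x y z => by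
    rw [h.phi_symm, h.phi_add_left, h.phi_symm y, h.phi_symm z]
  have hps' : ∀ (c : ℝ) (x y : g), φ x (c • y) = c * φ x y := fun c x y => by
    rw [h.phi_symm, h.phi_smul_left, h.phi_symm]
  have hBa' : ∀ a b c : A, B a (b + c) = B a b + B a c := fun a b c => by
    rw [hBsymm, hBadd, hBsymm b, hBsymm c]
  have hBs' : ∀ (r : ℝ) (a b : A), B a (r • b) = r * B a b := fun r a b => by
    rw [hBsymm, hBsmul, hBsymm]
  let brl : g →ₗ[ℝ] g →ₗ[ℝ] g := LinearMap.mk₂ ℝ br h.br_add_left h.br_smul_left hba' hbs'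
  let Jl : g →ₗ[ℝ] g := ⟨⟨J, h.J_add⟩, h.J_smul⟩
  let φl : g →ₗ[ℝ] Module.Dual ℝ g :=
    LinearMap.mk₂ ℝ φ h.phi_add_left h.phi_smul_left hpa' hps'
  let Bl : A →ₗ[ℝ] Module.Dual ℝ A := LinearMap.mk₂ ℝ B hBadd hBsmul hBa' hBs'
  refine ⟨fun u v => stmt4BrG brl u v, fun u => Jl.rTensor A u,
    fun u v => stmt4Phi φl Bl u v, ?_, ?_, ?_, ?_⟩
  · intro x y a b; exact stmt4BrG_tmul brl x y a b
  · intro x a; exact LinearMap.rTensor_tmul _ _ _ _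
  · intro x y a b; exact stmt4Phi_tmul φl Bl x y a b
  · exact stmt4_main Bl hBsymm hBnondeg hBassoc brl Jl φl h.br_skew h.jacobi h.J_sq
      h.integrable h.phi_symm h.phi_nondeg h.phi_invariant h.phi_hermitian
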